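/- Let a, b ∈ ℝ with a ≠ 0 and b² < a². If either λ1² + λ4² = λ2² + λ3², or b² < α2·a² (where α2 is the larger real root of f̃), then the quartic polynomial P(z) = u·z⁴ + v·z² + w has a complex root z with strictly positive real part (spectral instability of the equilibrium (b,0,0,a,0,0)). -/

import Mathlib

lemma quartic_root_real (u v w : ℝ) (hu : 0 < u) (hv : v < 0) (hd : 0 ≤ v^2 - 4*u*w) :
    ∃ z : ℂ, (u : ℂ) * z ^ 4 + (v : ℂ) * z ^ 2 + (w : ℂ) = 0 ∧ 0 < z.re := by
  set s : ℝ := Real.sqrt (v^2 - 4*u*w) with hsdef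
  have hs : s^2 = v^2 - 4*u*w := Real.sq_sqrt hd
  have hs0 : 0 ≤ s := Real.sqrt_nonneg _
  set y : ℝ := (-v + s) / (2*u) with hydef
  have hy0 : 0 < y := div_pos (by linarith) (by linarith)
  have hyroot : u * y^2 + v * y + w = 0 := by
    rw [hydef]; field_simp; nlinarith [hs]
  refine ⟨(Real.sqrt y : ℂ), ?_, by simpa using Real.sqrt_pos.mpr hy0⟩
  have hzy : (Real.sqrt y)^2 = y := Real.sq_sqrt hy0.le
  have h2 : ((Real.sqrt y : ℂ))^2 = (y : ℂ) := by norm_cast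
  rw [show ((Real.sqrt y : ℂ))^4 = (((Real.sqrt y : ℂ))^2)^2 by ring, h2]
  exact_mod_cast congrArg (fun t : ℝ => (t : ℂ)) hyroot

lemma quartic_root_complex (u v w : ℝ) (hu : 0 < u) (hd : v^2 - 4*u*w < 0) :
    ∃ z : ℂ, (u : ℂ) * z ^ 4 + (v : ℂ) * z ^ 2 + (w : ℂ) = 0 ∧ 0 < z.re := by
  set s : ℝ := Real.sqrt (4*u*w - v^2) with hsdef
  have hs : s^2 = 4*u*w - v^2 := Real.sq_sqrt (by linarith)
  have hs0 : 0 < s := Real.sqrt_pos.mpr (by linarith)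
  have hs' : ((s:ℂ))^2 = 4*(u:ℂ)*(w:ℂ) - (v:ℂ)^2 := by exact_mod_cast hs
  set y : ℂ := ((-v/(2*u) : ℝ) : ℂ) + ((s/(2*u) : ℝ) : ℂ) * Complex.I with hydef
  have hyim : y.im = s/(2*u) := by
    rw [hydef]
    simp only [Complex.add_im, Complex.ofReal_im, Complex.mul_im, Complex.ofReal_re,
      Complex.I_im, Complex.I_re]
    ring
  have hyim0 : y.im ≠ 0 := by rw [hyim]; positivity
  have hu0 : (u:ℂ) ≠ 0 := by exact_mod_cast hu.ne'
  have hy2 : (2*(u:ℂ)) * y = -(v:ℂ) + (s:ℂ) * Complex.I := by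
    rw [hydef]; push_cast; field_simp
  have h0 : (4*(u:ℂ)) * ((u:ℂ)*y^2 + (v:ℂ)*y + (w:ℂ)) = 0 := by
    have hexp : (4*(u:ℂ)) * ((u:ℂ)*y^2 + (v:ℂ)*y + (w:ℂ))
        = ((2*(u:ℂ))*y)^2 + 2*(v:ℂ)*((2*(u:ℂ))*y) + 4*(u:ℂ)*(w:ℂ) := by ring
    rw [hexp, hy2]
    linear_combination ((s:ℂ)^2)*Complex.I_sq - hs'
  have hyroot : (u:ℂ)*y^2 + (v:ℂ)*y + (w:ℂ) = 0 := by
    have h4 : (4*(u:ℂ)) ≠ 0 := by simp [hu0]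
    exact (mul_eq_zero.mp h0).resolve_left h4
  obtain ⟨z, hz⟩ := IsAlgClosed.exists_pow_nat_eq y (n := 2) (by norm_num)
  have hzre : z.re ≠ 0 := by
    intro h
    apply hyim0
    rw [← hz]
    simp [pow_two, Complex.mul_im, h]
  have hzroot : ∀ t : ℂ, t^2 = y → (u : ℂ) * t ^ 4 + (v:ℂ) * t ^ 2 + (w:ℂ) = 0 := by
    intro t ht
    rw [show t^4 = (t^2)^2 by ring, ht]
    exact hyroot
  rcases hzre.lt_or_gt with h | h
  · exact ⟨-z, hzroot (-z) (by rw [show (-z)^2 = z^2 by ring]; exact hz), by simpa using h⟩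
  · exact ⟨z, hzroot z hz, h⟩

lemma so4_aux1 (l1 l2 l3 l4 N R M G H : ℝ) :
    (-2*(l1+l4)^2*(l2+l3)^2*(N*R*G - M^2*H))^2
      - 4*((l1+l2)*(l1+l3)*(l1+l4)^4*(l2+l3)^4*(l2+l4)*(l3+l4))
        *((l1-l2)*(l1-l3)*(l2-l4)*(l3-l4)*G^2)
    = 4*(l1+l4)^4*(l2+l3)^4 *
        ((N*R*G - M^2*H)^2
          - ((l1^2-l2^2)*(l3^2-l4^2))*((l1^2-l3^2)*(l2^2-l4^2))*G^2) := by
  ring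

lemma so4_aux2 (N R M G H p q : ℝ) (hp : p = R^2 - M^2) (hq : q = N^2 - M^2) :
    (N*R*G - M^2*H)^2 - p*q*G^2 = M^2*((N*G - R*H)^2 - (H^2 - G^2)*p) := by
  subst hp hq; ring

lemma so4_aux3 (l1 l2 l3 l4 a b : ℝ) :
    ((l1*l2-l3*l4)*((l2+l3)^2*a^2 - (l1+l4)^2*b^2)
        - (l1*l3-l2*l4)*((l2+l3)^2*a^2 + (l1+l4)^2*b^2))^2
      - (((l2+l3)^2*a^2 + (l1+l4)^2*b^2)^2 - ((l2+l3)^2*a^2 - (l1+l4)^2*b^2)^2)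
        *((l1^2-l2^2)*(l3^2-l4^2))
    = (l1+l4)^2*(l2+l3)^2*((l1^2-l4^2)^2*b^4
        - 2*((l1^2 - l2^2)*(l3^2 - l4^2) + (l1^2 - l3^2)*(l2^2 - l4^2))*a^2*b^2
        + (l2^2-l3^2)^2*a^4) := by
  ring

lemma so4_auxp (l1 l2 l3 l4 : ℝ) :
    (l1^2-l2^2)*(l3^2-l4^2) = (l1*l3-l2*l4)^2 - (l1*l4-l2*l3)^2 := by ring

lemma so4_auxq (l1 l2 l3 l4 : ℝ) :
    (l1^2-l3^2)*(l2^2-l4^2) = (l1*l2-l3*l4)^2 - (l1*l4-l2*l3)^2 := by ring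


set_option maxHeartbeats 1000000 in
lemma so4_core (l1 l2 l3 l4 a b α1 α2 : ℝ) (h12 : l2 < l1) (h23 : l3 < l2) (h34 : l4 < l3)
    (s12 : 0 < l1 + l2) (s13 : 0 < l1 + l3) (s14 : 0 < l1 + l4)
    (s23 : 0 < l2 + l3) (s24 : 0 < l2 + l4) (s34 : 0 < l3 + l4)
    (ha2 : 0 < a^2) (hba : b ^ 2 < a ^ 2) (hα : α1 < α2)
    (hr1 : (l1^2 - l4^2)^2 * α1 ^ 2
        - 2 * ((l1^2 - l2^2) * (l3^2 - l4^2) + (l1^2 - l3^2) * (l2^2 - l4^2)) * α1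
        + (l2^2 - l3^2)^2 = 0)
    (hr2 : (l1^2 - l4^2)^2 * α2 ^ 2
        - 2 * ((l1^2 - l2^2) * (l3^2 - l4^2) + (l1^2 - l3^2) * (l2^2 - l4^2)) * α2
        + (l2^2 - l3^2)^2 = 0)
    (hcase : l1 ^ 2 + l4 ^ 2 = l2 ^ 2 + l3 ^ 2 ∨ b ^ 2 < α2 * a ^ 2) :
    0 < (l2 + l3)^2 * (-((l2^2 + l1*l4) * (l3^2 + l1*l4)) + l2*l3 * (l1 + l4)^2) * a^2
        - (l1 + l4)^2 * ((l1^2 + l2*l3) * (l4^2 + l2*l3) - l1*l4 * (l2 + l3)^2) * b^2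
    ∨ ((l1^2-l4^2)^2*b^4
        - 2*((l1^2 - l2^2)*(l3^2 - l4^2) + (l1^2 - l3^2)*(l2^2 - l4^2))*a^2*b^2
        + (l2^2-l3^2)^2*a^4 < 0 ∧ l1*l4 - l2*l3 ≠ 0) := by
  have d12 : 0 < l1 - l2 := sub_pos.mpr h12
  have d23 : 0 < l2 - l3 := sub_pos.mpr h23
  have d34 : 0 < l3 - l4 := sub_pos.mpr h34
  have d13 : 0 < l1 - l3 := by linarith
  have d24 : 0 < l2 - l4 := by linarith
  have d14 : 0 < l1 - l4 := by linarith
  have x12 : 0 < l1^2 - l2^2 := by linarith [mul_pos d12 s12]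
  have x13 : 0 < l1^2 - l3^2 := by linarith [mul_pos d13 s13]
  have x14 : 0 < l1^2 - l4^2 := by linarith [mul_pos d14 s14]
  have x23 : 0 < l2^2 - l3^2 := by linarith [mul_pos d23 s23]
  have x24 : 0 < l2^2 - l4^2 := by linarith [mul_pos d24 s24]
  have x34 : 0 < l3^2 - l4^2 := by linarith [mul_pos d34 s34]
  have hp : 0 < (l1^2 - l2^2) * (l3^2 - l4^2) := mul_pos x12 x34
  have hq : 0 < (l1^2 - l3^2) * (l2^2 - l4^2) := mul_pos x13 x24
  have hSt : 0 < (l1^2 - l4^2)^2 := by positivity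
  have hPQ : 0 < (l1^2 - l2^2) * (l3^2 - l4^2) + (l1^2 - l3^2) * (l2^2 - l4^2) := by linarith
  have hn : 0 < l1*l2 - l3*l4 := by linarith [mul_pos d13 s24, mul_pos s13 d24]
  have hrr : 0 < l1*l3 - l2*l4 := by linarith [mul_pos d12 s34, mul_pos s12 d34]
  have hE1pos : 0 < (l1^2 + l2*l3) * (l4^2 + l2*l3) - l1*l4 * (l2 + l3)^2 := by
    nlinarith [mul_pos hn hrr, sq_nonneg (l1*l4 - l2*l3)]
  have hE2pos : 0 < -((l2^2 + l1*l4) * (l3^2 + l1*l4)) + l2*l3 * (l1 + l4)^2 := by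
    nlinarith [mul_pos (mul_pos (mul_pos s13 d24) d12) s34,
      mul_pos (mul_pos (mul_pos d13 s24) s12) d34]
  -- Vieta
  have hsum : (l1^2 - l4^2)^2 * (α1 + α2)
      = 2 * ((l1^2 - l2^2) * (l3^2 - l4^2) + (l1^2 - l3^2) * (l2^2 - l4^2)) := by
    have hkey : (α1 - α2) * ((l1^2 - l4^2)^2 * (α1 + α2)
        - 2 * ((l1^2 - l2^2) * (l3^2 - l4^2) + (l1^2 - l3^2) * (l2^2 - l4^2))) = 0 := by
      linear_combination hr1 - hr2
    have h1 : α1 - α2 ≠ 0 := by linarith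
    have := (mul_eq_zero.mp hkey).resolve_left h1
    linarith
  have hprod : (l1^2 - l4^2)^2 * α1 * α2 = (l2^2 - l3^2)^2 := by
    linear_combination α1 * hsum - hr1
  have hStα2 : (l1^2 - l2^2) * (l3^2 - l4^2) + (l1^2 - l3^2) * (l2^2 - l4^2)
      < (l1^2 - l4^2)^2 * α2 := by
    linarith [hsum, mul_pos hSt (sub_pos.mpr hα)]
  have hα1nonneg : 0 ≤ α1 := by
    by_contra hneg
    push_neg at hneg
    have hw1 : 0 < (l1^2 - l4^2)^2 * α2 := lt_trans hPQ hStα2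
    have := mul_pos (neg_pos.mpr hneg) hw1
    linarith [hprod, sq_nonneg (l2^2 - l3^2)]
  have hα1UB : α1 * ((l1^2 - l2^2) * (l3^2 - l4^2) + (l1^2 - l3^2) * (l2^2 - l4^2))
      ≤ (l2^2 - l3^2)^2 := by
    linarith [hprod, mul_nonneg hα1nonneg (le_of_lt (sub_pos.mpr hStα2))]
  -- reduce case 1 to case 2
  have hb2 : b^2 < α2 * a^2 := by
    rcases hcase with hc1 | hb2
    · have hroot1 : (l1^2 - l4^2)^2 * (1 - α1) * (1 - α2) = 0 := by
        linear_combination (l1^2 + l4^2 - l2^2 - l3^2) * hc1 - hsum + hprod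
      have h12' : (1 - α1) * (1 - α2) = 0 := by
        rcases mul_eq_zero.mp hroot1 with h | h
        · rcases mul_eq_zero.mp h with h' | h'
          · exact absurd h' (by positivity)
          · exact mul_eq_zero_of_left h' _
        · exact mul_eq_zero_of_right _ h
      have hα2ge : 1 ≤ α2 := by
        rcases mul_eq_zero.mp h12' with h | h
        · have : α1 = 1 := by linarith
          linarith
        · linarith
      linarith [mul_nonneg (by linarith : (0:ℝ) ≤ α2 - 1) ha2.le]
    · exact hb2
  by_cases hX : 0 < (l2 + l3)^2 * (-((l2^2 + l1*l4) * (l3^2 + l1*l4)) + l2*l3 * (l1 + l4)^2) * a^2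
        - (l1 + l4)^2 * ((l1^2 + l2*l3) * (l4^2 + l2*l3) - l1*l4 * (l2 + l3)^2) * b^2
  · exact Or.inl hX
  · push_neg at hX
    right
    have hm : l1*l4 - l2*l3 ≠ 0 := by
      intro hm0
      have hc_root : (l1^2-l4^2)^2 * ((l2+l3)^2)^2
          - 2 * ((l1^2 - l2^2) * (l3^2 - l4^2) + (l1^2 - l3^2) * (l2^2 - l4^2))
            * ((l2+l3)^2 * (l1+l4)^2)
          + (l2^2-l3^2)^2 * ((l1+l4)^2)^2 = 0 := by
        linear_combination (4*(l1+l4)^2*(l2+l3)^2*(l1*l4 - l2*l3)) * hm0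
      have hfact : (l1^2-l4^2)^2 * ((l2+l3)^2 - α1*(l1+l4)^2) * ((l2+l3)^2 - α2*(l1+l4)^2)
          = 0 := by
        linear_combination hc_root - ((l2+l3)^2*(l1+l4)^2) * hsum + ((l1+l4)^2)^2 * hprod
      have hStα1 : (l1^2-l4^2)^2 * α1
          < (l1^2 - l2^2) * (l3^2 - l4^2) + (l1^2 - l3^2) * (l2^2 - l4^2) := by
        linarith [hsum, mul_pos hSt (sub_pos.mpr hα)]
      have hfirst : 0 < (l2+l3)^2 - α1*(l1+l4)^2 := by
        have hid5 : (l1^2-l4^2)^2 * (l2+l3)^2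
            - ((l1^2 - l2^2) * (l3^2 - l4^2) + (l1^2 - l3^2) * (l2^2 - l4^2)) * (l1+l4)^2
            = 2*(l1+l4)^2*((l1^2 + l2*l3) * (l4^2 + l2*l3) - l1*l4 * (l2 + l3)^2) := by
          ring
        by_contra hng
        push_neg at hng
        have h3 : (l1^2-l4^2)^2 * ((l2+l3)^2 - α1*(l1+l4)^2) ≤ 0 :=
          mul_nonpos_of_nonneg_of_nonpos hSt.le hng
        linarith [hid5, h3, mul_pos (pow_pos s14 2) (sub_pos.mpr hStα1),
          mul_pos (pow_pos s14 2) hE1pos]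
      have hc2 : (l2+l3)^2 = α2*(l1+l4)^2 := by
        have h2 : ((l2+l3)^2 - α1*(l1+l4)^2) * ((l2+l3)^2 - α2*(l1+l4)^2) = 0 := by
          rcases mul_eq_zero.mp hfact with h | h
          · rcases mul_eq_zero.mp h with h' | h'
            · exact absurd h' (by positivity)
            · exact mul_eq_zero_of_left h' _
          · exact mul_eq_zero_of_right _ h
        rcases mul_eq_zero.mp h2 with h | h
        · exact absurd h hfirst.ne'
        · linarith
      have hE12 : (-((l2^2 + l1*l4) * (l3^2 + l1*l4)) + l2*l3 * (l1 + l4)^2)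
          = ((l1^2 + l2*l3) * (l4^2 + l2*l3) - l1*l4 * (l2 + l3)^2) := by
        linear_combination (-2*(l1*l4 - l2*l3)) * hm0
      have hkey2 : (l2 + l3)^2 * (-((l2^2 + l1*l4) * (l3^2 + l1*l4)) + l2*l3 * (l1 + l4)^2) * a^2
          - (l1 + l4)^2 * ((l1^2 + l2*l3) * (l4^2 + l2*l3) - l1*l4 * (l2 + l3)^2) * b^2
          = ((l1^2 + l2*l3) * (l4^2 + l2*l3) - l1*l4 * (l2 + l3)^2) * (l1+l4)^2
            * (α2*a^2 - b^2) := by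
        linear_combination ((-((l2^2 + l1*l4) * (l3^2 + l1*l4)) + l2*l3 * (l1 + l4)^2)*a^2) * hc2
          + (α2*(l1+l4)^2*a^2) * hE12
      linarith [hkey2, mul_pos (mul_pos hE1pos (pow_pos s14 2)) (sub_pos.mpr hb2), hX]
    refine ⟨?_, hm⟩
    by_contra hF0
    push_neg at hF0
    have hfact2 : (l1^2-l4^2)^2*b^4
        - 2*((l1^2 - l2^2)*(l3^2 - l4^2) + (l1^2 - l3^2)*(l2^2 - l4^2))*a^2*b^2
        + (l2^2-l3^2)^2*a^4
        = (l1^2-l4^2)^2 * (b^2 - α1*a^2) * (b^2 - α2*a^2) := by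
      linear_combination (a^2*b^2) * hsum - (a^4) * hprod
    have hY : b^2 - α2*a^2 < 0 := by linarith
    have hb1 : b^2 - α1*a^2 ≤ 0 := by
      by_contra hcontra
      push_neg at hcontra
      have := mul_pos (mul_pos hSt hcontra) (neg_pos.mpr hY)
      linarith [hfact2, hF0]
    have hid4 : ((l2 + l3)^2 * (-((l2^2 + l1*l4) * (l3^2 + l1*l4)) + l2*l3 * (l1 + l4)^2))
        * ((l1^2 - l2^2)*(l3^2 - l4^2) + (l1^2 - l3^2)*(l2^2 - l4^2))
        - ((l1 + l4)^2 * ((l1^2 + l2*l3) * (l4^2 + l2*l3) - l1*l4 * (l2 + l3)^2))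
          * (l2^2-l3^2)^2
        = 2*((l1^2 - l2^2)*(l3^2 - l4^2))*((l1^2 - l3^2)*(l2^2 - l4^2))*(l2+l3)^2 := by
      ring
    have hid4a : ((l2 + l3)^2 * (-((l2^2 + l1*l4) * (l3^2 + l1*l4)) + l2*l3 * (l1 + l4)^2))
        * ((l1^2 - l2^2)*(l3^2 - l4^2) + (l1^2 - l3^2)*(l2^2 - l4^2)) * a^2
        - ((l1 + l4)^2 * ((l1^2 + l2*l3) * (l4^2 + l2*l3) - l1*l4 * (l2 + l3)^2))
          * (l2^2-l3^2)^2 * a^2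
        = 2*((l1^2 - l2^2)*(l3^2 - l4^2))*((l1^2 - l3^2)*(l2^2 - l4^2))*(l2+l3)^2*a^2 := by
      linear_combination a^2 * hid4
    have hT4 : 0 < (l1 + l4)^2 * ((l1^2 + l2*l3) * (l4^2 + l2*l3) - l1*l4 * (l2 + l3)^2) :=
      mul_pos (pow_pos s14 2) hE1pos
    linarith [hid4a,
      mul_nonneg (mul_nonneg hT4.le (by linarith : (0:ℝ) ≤ α1*a^2 - b^2)) hPQ.le,
      mul_nonneg (mul_nonneg hT4.le
        (by linarith [hα1UB] : (0:ℝ) ≤ (l2^2-l3^2)^2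
          - α1*((l1^2 - l2^2)*(l3^2 - l4^2) + (l1^2 - l3^2)*(l2^2 - l4^2)))) (sq_nonneg a),
      mul_pos (mul_pos (mul_pos hp hq) (pow_pos s23 2)) ha2,
      mul_nonneg (neg_nonneg.mpr hX) hPQ.le]

set_option maxHeartbeats 1000000 in
/-- spectral instability. If `λ1² + λ4² = λ2² + λ3²`, or `b² < α2·a²`,
the characteristic quartic `u z⁴ + v z² + w` has a root with strictly positive real part. -/
theorem so4_spectral_instability
    (l1 l2 l3 l4 : ℝ) (h12 : l2 < l1) (h23 : l3 < l2) (h34 : l4 < l3)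
    (s12 : 0 < l1 + l2) (s13 : 0 < l1 + l3) (s14 : 0 < l1 + l4)
    (s23 : 0 < l2 + l3) (s24 : 0 < l2 + l4) (s34 : 0 < l3 + l4)
    (a b : ℝ) (ha : a ≠ 0) (hba : b ^ 2 < a ^ 2)
    (E1 E2 S T u v w : ℝ)
    (hE1 : E1 = (l1^2 + l2*l3) * (l4^2 + l2*l3) - l1*l4 * (l2 + l3)^2)
    (hE2 : E2 = -((l2^2 + l1*l4) * (l3^2 + l1*l4)) + l2*l3 * (l1 + l4)^2)
    (hS : S = (l2 + l3)^2 * E2) (hT : T = (l1 + l4)^2 * E1)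
    (hu : u = (l1+l2)*(l1+l3)*(l1+l4)^4*(l2+l3)^4*(l2+l4)*(l3+l4))
    (hv : v = -2*(l1+l4)^2*(l2+l3)^2*(S*a^2 - T*b^2))
    (hw : w = (l1-l2)*(l1-l3)*(l2-l4)*(l3-l4)*((l2+l3)^2*a^2 - (l1+l4)^2*b^2)^2)
    (α1 α2 : ℝ) (hα : α1 < α2)
    (hr1 : (l1^2 - l4^2)^2 * α1 ^ 2
        - 2 * ((l1^2 - l2^2) * (l3^2 - l4^2) + (l1^2 - l3^2) * (l2^2 - l4^2)) * α1
        + (l2^2 - l3^2)^2 = 0)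
    (hr2 : (l1^2 - l4^2)^2 * α2 ^ 2
        - 2 * ((l1^2 - l2^2) * (l3^2 - l4^2) + (l1^2 - l3^2) * (l2^2 - l4^2)) * α2
        + (l2^2 - l3^2)^2 = 0)
    (hcase : l1 ^ 2 + l4 ^ 2 = l2 ^ 2 + l3 ^ 2 ∨ b ^ 2 < α2 * a ^ 2) :
    ∃ z : ℂ, (u : ℂ) * z ^ 4 + (v : ℂ) * z ^ 2 + (w : ℂ) = 0 ∧ 0 < z.re := by
  have ha2 : 0 < a^2 := by positivity
  have hu0 : 0 < u := by
    rw [hu]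
    exact mul_pos (mul_pos (mul_pos (mul_pos (mul_pos s12 s13) (pow_pos s14 4))
      (pow_pos s23 4)) s24) s34
  rcases so4_core l1 l2 l3 l4 a b α1 α2 h12 h23 h34 s12 s13 s14 s23 s24 s34 ha2 hba hα
      hr1 hr2 hcase with hXpos | ⟨hFneg, hm⟩
  · have hX : 0 < S*a^2 - T*b^2 := by
      rw [hS, hT, hE1, hE2]
      linarith [hXpos]
    have hv0 : v < 0 := by
      rw [hv]
      have hc : 0 < (l1+l4)^2*(l2+l3)^2 := by positivity
      linarith [mul_pos hc hX]
    rcases lt_or_ge (v^2 - 4*u*w) 0 with hd | hd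
    · exact quartic_root_complex u v w hu0 hd
    · exact quartic_root_real u v w hu0 hv0 hd
  · set G := (l2+l3)^2*a^2 - (l1+l4)^2*b^2 with hG
    set H := (l2+l3)^2*a^2 + (l1+l4)^2*b^2 with hH
    set N := l1*l2 - l3*l4 with hN
    set R := l1*l3 - l2*l4 with hR
    set M := l1*l4 - l2*l3 with hM
    have e1 : E1 = N*R + M^2 := by rw [hE1, hN, hR, hM]; ring
    have e2 : E2 = N*R - M^2 := by rw [hE2, hN, hR, hM]; ring
    have hXid : S*a^2 - T*b^2 = N*R*G - M^2*H := by
      rw [hS, hT, e1, e2, hG, hH]; ring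
    have hd1 : v^2 - 4*u*w = 4*(l1+l4)^4*(l2+l3)^4 *
        ((N*R*G - M^2*H)^2
          - ((l1^2-l2^2)*(l3^2-l4^2))*((l1^2-l3^2)*(l2^2-l4^2))*G^2) := by
      rw [hv, hXid, hw, hu]
      exact so4_aux1 l1 l2 l3 l4 N R M G H
    have hd2 : (N*R*G - M^2*H)^2
          - ((l1^2-l2^2)*(l3^2-l4^2))*((l1^2-l3^2)*(l2^2-l4^2))*G^2
        = M^2*((N*G - R*H)^2 - (H^2 - G^2)*((l1^2-l2^2)*(l3^2-l4^2))) := by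
      exact so4_aux2 N R M G H _ _ (so4_auxp l1 l2 l3 l4) (so4_auxq l1 l2 l3 l4)
    have hd3 : (N*G - R*H)^2 - (H^2 - G^2)*((l1^2-l2^2)*(l3^2-l4^2))
        = (l1+l4)^2*(l2+l3)^2*((l1^2-l4^2)^2*b^4
            - 2*((l1^2 - l2^2)*(l3^2 - l4^2) + (l1^2 - l3^2)*(l2^2 - l4^2))*a^2*b^2
            + (l2^2-l3^2)^2*a^4) :=
      so4_aux3 l1 l2 l3 l4 a b
    have hdisc : v^2 - 4*u*w < 0 := by
      rw [hd1, hd2, hd3]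
      have hM2 : 0 < M^2 := (sq_nonneg M).lt_of_ne' (pow_ne_zero 2 hm)
      exact mul_neg_of_pos_of_neg (by positivity)
        (mul_neg_of_pos_of_neg hM2 (mul_neg_of_pos_of_neg (by positivity) hFneg))
    exact quartic_root_complex u v w hu0 hdisc
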